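/- Every nonnegative integer solution pair (x, y) with x ≥ y of the equation x² − (n+2)xy + y² = 1 is of the form (s_{n,m}, s_{n,m−1}) for some m ≥ 1, where s_{n,m} is defined by s_{n,0}=0, s_{n,1}=1, s_{n,m+1}=(n+2)s_{n,m}−s_{n,m−1}. -/
import Mathlib


/-- The sequence s_{n,m}: s_{n,0}=0, s_{n,1}=1, s_{n,m+2}=(n+2)s_{n,m+1}−s_{n,m}. -/
def sSeq (n : ℤ) : ℕ → ℤ
  | 0 => 0
  | 1 => 1
  | (m + 2) => (n + 2) * sSeq n (m + 1) - sSeq n m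

lemma sSeq_aux (n : ℤ) (hn : 0 ≤ n) : ∀ k : ℕ, ∀ x y : ℤ, y.toNat = k → 0 ≤ y → y ≤ x →
    x ^ 2 - (n + 2) * x * y + y ^ 2 = 1 →
    ∃ m : ℕ, 1 ≤ m ∧ x = sSeq n m ∧ y = sSeq n (m - 1) := by
  intro k
  induction k using Nat.strong_induction_on with
  | _ k ih =>
    intro x y hk hy hxy heq
    rcases eq_or_lt_of_le hy with h0 | h0
    · -- y = 0
      have hy0 : y = 0 := h0.symm
      subst hy0
      have hx : x = 1 := by nlinarith
      exact ⟨1, le_refl 1, by simp [hx, sSeq]⟩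
    · -- y > 0
      have hxpos : 0 < x := lt_of_lt_of_le h0 hxy
      set x' := (n + 2) * y - x with hx'
      have hmul : x' * x = y ^ 2 - 1 := by ring_nf; nlinarith
      have hx'0 : 0 ≤ x' := by
        by_contra h
        push_neg at h
        nlinarith
      have hx'y : x' < y := by nlinarith
      have heq' : y ^ 2 - (n + 2) * y * x' + x' ^ 2 = 1 := by
        rw [hx']; ring_nf; nlinarith
      have hlt : x'.toNat < k := by
        omega
      obtain ⟨m, hm1, hym, hx'm⟩ := ih x'.toNat hlt y x' rfl hx'0 (le_of_lt hx'y) heq'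
      obtain ⟨j, rfl⟩ : ∃ j, m = j + 1 := ⟨m - 1, (Nat.succ_pred_eq_of_pos hm1).symm⟩
      refine ⟨j + 2, by omega, ?_, ?_⟩
      · show x = sSeq n (j + 2)
        simp only [sSeq]
        simp only [Nat.add_sub_cancel] at hx'm
        rw [← hym, ← hx'm]; linarith [hx']
      · exact hym

theorem pell_solutions_are_sSeq (n : ℕ) (x y : ℤ)
    (hy : 0 ≤ y) (hxy : y ≤ x)
    (heq : x ^ 2 - ((n : ℤ) + 2) * x * y + y ^ 2 = 1) :
    ∃ m : ℕ, 1 ≤ m ∧ x = sSeq (n : ℤ) m ∧ y = sSeq (n : ℤ) (m - 1) := by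
  exact sSeq_aux (n : ℤ) (Int.natCast_nonneg n) y.toNat x y rfl hy hxy heq
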